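/- arXiv:1509.06023 — 2 statements merged into one kernel-verified Lean document; each statement's English description precedes it below -/
import Mathlib

section
/- For d ≥ 3 and k ≥ 1, let K_k = conv({0_d} ∪ ({1} × B_{k+1}^{d-1})) ⊆ ℝ^d. Every invertible affine map T with T(K_k) = K_k fixes every point of the axis ℝ × {0_{d-1}} ∩ K_k; more precisely, T fixes 0_d and maps {1} × ∂B_{k+1}^{d-1} to itself, hence fixes the first coordinate. -/
open Set

def coneK (d k : ℕ) : Set (ℝ × EuclideanSpace ℝ (Fin (d - 1))) :=
  convexHull ℝ ({(0, 0)} ∪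
    {p : ℝ × EuclideanSpace ℝ (Fin (d - 1)) | p.1 = 1 ∧ ∑ i, |p.2 i| ^ (k + 1) ≤ 1})

lemma lp_norm_le_iff {m n : ℕ} [Fact (1 ≤ (n : ENNReal))] (hn : 0 < n)
    (v : PiLp (n : ENNReal) (fun _ : Fin m => ℝ)) {t : ℝ} (ht : 0 ≤ t) :
    ‖v‖ ≤ t ↔ ∑ i, |v i| ^ n ≤ t ^ n := by
  have htr : ((n : ENNReal)).toReal = (n : ℝ) := by simp
  have hnr : (0:ℝ) < n := by exact_mod_cast hn
  rw [PiLp.norm_eq_sum (by rw [htr]; exact hnr)]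
  rw [htr]
  have hsum : (∑ i, ‖v i‖ ^ (n:ℝ)) = ∑ i, |v i| ^ n := by
    refine Finset.sum_congr rfl fun i _ => ?_
    rw [Real.norm_eq_abs, Real.rpow_natCast]
  rw [hsum, one_div]
  have hA : 0 ≤ ∑ i, |v i| ^ n :=
    Finset.sum_nonneg fun i _ => pow_nonneg (abs_nonneg _) _
  constructor
  · intro h
    calc ∑ i, |v i| ^ n = ((∑ i, |v i| ^ n) ^ ((n:ℝ)⁻¹)) ^ n :=
          (Real.rpow_inv_natCast_pow hA hn.ne').symm
      _ ≤ t ^ n := pow_le_pow_left₀ (Real.rpow_nonneg hA _) h n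
  · intro h
    calc (∑ i, |v i| ^ n) ^ ((n:ℝ)⁻¹) ≤ (t ^ n) ^ ((n:ℝ)⁻¹) :=
          Real.rpow_le_rpow hA h (by positivity)
      _ = t := Real.pow_rpow_inv_natCast ht hn.ne'

def toLp (n m : ℕ) (v : EuclideanSpace ℝ (Fin m)) : PiLp (n : ENNReal) (fun _ : Fin m => ℝ) :=
  WithLp.toLp (n : ENNReal) (WithLp.ofLp v)

lemma coneK_eq (d k : ℕ) :
    coneK d k = {p : ℝ × EuclideanSpace ℝ (Fin (d-1)) |
      0 ≤ p.1 ∧ p.1 ≤ 1 ∧ ∑ i, |p.2 i| ^ (k+1) ≤ p.1 ^ (k+1)} := by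
  haveI : Fact (1 ≤ ((k+1 : ℕ) : ENNReal)) := ⟨by exact_mod_cast Nat.succ_le_succ (Nat.zero_le k)⟩
  have hk1 : 0 < k + 1 := Nat.succ_pos k
  apply le_antisymm
  · apply convexHull_min
    · rintro p (rfl | ⟨h1, h2⟩)
      · refine ⟨le_refl 0, zero_le_one, ?_⟩
        simp [zero_pow hk1.ne']
      · exact ⟨by rw [h1]; exact zero_le_one, le_of_eq h1, by rw [h1, one_pow]; exact h2⟩
    · rintro ⟨t₁, v₁⟩ ⟨h₁0, h₁1, h₁N⟩ ⟨t₂, v₂⟩ ⟨h₂0, h₂1, h₂N⟩ a b ha hb hab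
      dsimp only at h₁0 h₁1 h₁N h₂0 h₂1 h₂N
      refine ⟨?_, ?_, ?_⟩
      · show (0:ℝ) ≤ a * t₁ + b * t₂
        positivity
      · show a * t₁ + b * t₂ ≤ 1
        nlinarith
      · have key : ∀ (t : ℝ) (v : EuclideanSpace ℝ (Fin (d-1))), 0 ≤ t →
            ((∑ i, |v i| ^ (k+1) ≤ t ^ (k+1)) ↔ ‖toLp (k+1) (d-1) v‖ ≤ t) := by
          intro t v ht
          exact (lp_norm_le_iff hk1 (toLp (k+1) (d-1) v) ht).symm
        have h₁ : ‖toLp (k+1) (d-1) v₁‖ ≤ t₁ := (key t₁ v₁ h₁0).1 h₁N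
        have h₂ : ‖toLp (k+1) (d-1) v₂‖ ≤ t₂ := (key t₂ v₂ h₂0).1 h₂N
        have habt : (0:ℝ) ≤ a * t₁ + b * t₂ := by positivity
        show ∑ i, |(a • v₁ + b • v₂ : EuclideanSpace ℝ (Fin (d-1))) i| ^ (k+1)
            ≤ (a * t₁ + b * t₂) ^ (k+1)
        refine (key _ _ habt).2 ?_
        calc ‖toLp (k+1) (d-1) (a • v₁ + b • v₂)‖
            = ‖a • toLp (k+1) (d-1) v₁ + b • toLp (k+1) (d-1) v₂‖ := rfl
          _ ≤ ‖a • toLp (k+1) (d-1) v₁‖ + ‖b • toLp (k+1) (d-1) v₂‖ := norm_add_le _ _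
          _ = |a| * ‖toLp (k+1) (d-1) v₁‖ + |b| * ‖toLp (k+1) (d-1) v₂‖ := by
              rw [norm_smul, norm_smul, Real.norm_eq_abs, Real.norm_eq_abs]
          _ ≤ a * t₁ + b * t₂ := by
              rw [abs_of_nonneg ha, abs_of_nonneg hb]
              have := norm_nonneg (toLp (k+1) (d-1) v₁)
              have := norm_nonneg (toLp (k+1) (d-1) v₂)
              nlinarith
  · rintro ⟨t, v⟩ ⟨h0, h1, hN⟩
    dsimp only at h0 h1 hN
    rcases eq_or_lt_of_le h0 with h | h
    · have hv : v = 0 := by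
        ext i
        have hterm : ∀ j ∈ Finset.univ, (0:ℝ) ≤ |v j| ^ (k+1) :=
          fun j _ => pow_nonneg (abs_nonneg _) _
        have hzero : |v i| ^ (k+1) = 0 := by
          have hle : ∑ j, |v j| ^ (k+1) ≤ 0 := by
            rw [← h] at hN
            simpa [zero_pow hk1.ne'] using hN
          exact (Finset.sum_eq_zero_iff_of_nonneg hterm).1
            (le_antisymm hle (Finset.sum_nonneg hterm)) i (Finset.mem_univ i)
        have := pow_eq_zero_iff hk1.ne' |>.1 hzero
        simpa using this
      have heq0 : ((t,v) : ℝ × EuclideanSpace ℝ (Fin (d-1))) = (0,0) := by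
        rw [hv, ← h]
      rw [heq0]
      exact subset_convexHull ℝ _ (Or.inl rfl)
    · set q : ℝ × EuclideanSpace ℝ (Fin (d-1)) := (1, t⁻¹ • v) with hq
      have hqmem : q ∈ coneK d k := by
        apply subset_convexHull ℝ _
        right
        refine ⟨rfl, ?_⟩
        show ∑ i, |(t⁻¹ • v) i| ^ (k+1) ≤ 1
        have hco : ∀ i, |(t⁻¹ • v) i| ^ (k+1) = t⁻¹ ^ (k+1) * |v i| ^ (k+1) := by
          intro i
          show |t⁻¹ * v i| ^ (k+1) = _
          rw [abs_mul, mul_pow, abs_of_nonneg (inv_nonneg.2 h.le)]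
        rw [Finset.sum_congr rfl fun i _ => hco i, ← Finset.mul_sum]
        calc t⁻¹ ^ (k+1) * ∑ i, |v i| ^ (k+1) ≤ t⁻¹ ^ (k+1) * t ^ (k+1) := by
              apply mul_le_mul_of_nonneg_left hN (by positivity)
          _ = 1 := by rw [← mul_pow, inv_mul_cancel₀ h.ne', one_pow]
      have h0mem : ((0,0) : ℝ × EuclideanSpace ℝ (Fin (d-1))) ∈ coneK d k :=
        subset_convexHull ℝ _ (Or.inl rfl)
      have hmem := (convex_convexHull ℝ _) h0mem hqmem (by linarith : (0:ℝ) ≤ 1 - t) h0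
        (by ring : (1 - t) + t = 1)
      have heq : (1 - t) • ((0,0) : ℝ × EuclideanSpace ℝ (Fin (d-1))) + t • q = (t, v) := by
        have hz : ((0,0) : ℝ × EuclideanSpace ℝ (Fin (d-1))) = 0 := rfl
        rw [hz, smul_zero, zero_add, hq]
        show ((t * 1, t • t⁻¹ • v) : ℝ × EuclideanSpace ℝ (Fin (d-1))) = (t, v)
        rw [mul_one, smul_smul, mul_inv_cancel₀ h.ne', one_smul]
      rwa [heq] at hmem
def sphK (d k : ℕ) : Set (ℝ × EuclideanSpace ℝ (Fin (d - 1))) :=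
  {p | p.1 = 1 ∧ ∑ i, |p.2 i| ^ (k + 1) = 1}

lemma sum_single_pow {m n : ℕ} (hn : 0 < n) (i : Fin m) (c : ℝ) :
    ∑ j, |EuclideanSpace.single i c j| ^ n = |c| ^ n := by
  have h : ∀ j, |EuclideanSpace.single i c j| ^ n = if j = i then |c| ^ n else 0 := by
    intro j
    rw [EuclideanSpace.single_apply]
    split <;> simp [zero_pow hn.ne']
  rw [Finset.sum_congr rfl fun j _ => h j]
  simp

lemma vec_eq_zero_of_sum_le {m n : ℕ} (hn : 0 < n) (v : EuclideanSpace ℝ (Fin m))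
    (h : ∑ i, |v i| ^ n ≤ 0) : v = 0 := by
  ext i
  have hterm : ∀ j ∈ Finset.univ, (0:ℝ) ≤ |v j| ^ n := fun j _ => pow_nonneg (abs_nonneg _) _
  have hzero : |v i| ^ n = 0 :=
    (Finset.sum_eq_zero_iff_of_nonneg hterm).1
      (le_antisymm h (Finset.sum_nonneg hterm)) i (Finset.mem_univ i)
  have := pow_eq_zero_iff hn.ne' |>.1 hzero
  simpa using this

lemma strict_ineq {n : ℕ} (hn : 2 ≤ n) {a b v w : ℝ} (ha : 0 < a) (hb : 0 < b)
    (hab : a + b = 1) (hvw : v ≠ w) :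
    |a * v + b * w| ^ n < a * |v| ^ n + b * |w| ^ n := by
  have habs : |a * v + b * w| ≤ a * |v| + b * |w| := by
    calc |a * v + b * w| ≤ |a * v| + |b * w| := abs_add_le _ _
      _ = a * |v| + b * |w| := by rw [abs_mul, abs_mul, abs_of_pos ha, abs_of_pos hb]
  rcases eq_or_ne |v| |w| with he | hne
  · -- v = -w, w ≠ 0
    have hv : v = -w := by
      rcases abs_eq_abs.1 he with h | h
      · exact absurd h hvw
      · exact h
    have hw0 : w ≠ 0 := by
      intro h0
      exact hvw (by rw [hv, h0, neg_zero])
    have hstrict : |a * v + b * w| < a * |v| + b * |w| := by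
      rw [hv, abs_neg]
      have : a * -w + b * w = (b - a) * w := by ring
      rw [this, abs_mul]
      have h1 : |b - a| < a + b := by
        rw [abs_lt]; constructor <;> linarith
      calc |b - a| * |w| < (a + b) * |w| :=
            mul_lt_mul_of_pos_right h1 (abs_pos.2 hw0)
        _ = a * |w| + b * |w| := by ring
    calc |a * v + b * w| ^ n < (a * |v| + b * |w|) ^ n := by
          apply pow_lt_pow_left₀ hstrict (abs_nonneg _) (by omega)
      _ ≤ a * |v| ^ n + b * |w| ^ n := by
          have := (convexOn_pow (𝕜 := ℝ) n).2 (Set.mem_Ici.2 (abs_nonneg v))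
            (Set.mem_Ici.2 (abs_nonneg w)) ha.le hb.le hab
          simpa using this
  · have h1 : |a * v + b * w| ^ n ≤ (a * |v| + b * |w|) ^ n :=
      pow_le_pow_left₀ (abs_nonneg _) habs n
    have h2 : (a * |v| + b * |w|) ^ n < a * |v| ^ n + b * |w| ^ n := by
      have := (strictConvexOn_pow hn).2 (Set.mem_Ici.2 (abs_nonneg v))
        (Set.mem_Ici.2 (abs_nonneg w)) hne ha hb hab
      simpa using this
    exact lt_of_le_of_lt h1 h2

lemma extremePoints_coneK (d k : ℕ) (hd : 3 ≤ d) (hk : 1 ≤ k) :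
    Set.extremePoints ℝ (coneK d k) = {((0:ℝ), (0:EuclideanSpace ℝ (Fin (d-1))))} ∪ sphK d k := by
  have hk1 : 0 < k + 1 := Nat.succ_pos k
  have hk2 : 2 ≤ k + 1 := by omega
  have hdim : 0 < d - 1 := by omega
  apply Set.Subset.antisymm
  · rintro ⟨x1, u⟩ hx
    have hxgen := extremePoints_convexHull_subset hx
    rcases hxgen with h0 | ⟨hx1, hxN⟩
    · exact Or.inl h0
    dsimp only at hx1 hxN
    subst hx1
    rcases eq_or_lt_of_le hxN with heq1 | hlt
    · exact Or.inr ⟨rfl, heq1⟩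
    exfalso
    set i0 : Fin (d-1) := ⟨0, hdim⟩ with hi0
    set e0 : EuclideanSpace ℝ (Fin (d-1)) := EuclideanSpace.single i0 1 with he0
    set f : ℝ → ℝ := fun s => ∑ i, |u i + s * e0 i| ^ (k+1) with hf
    have hcont : Continuous f := by
      apply continuous_finset_sum
      intro i _
      exact ((continuous_const.add (continuous_id.mul continuous_const)).abs).pow _
    have hf0 : f 0 < 1 := by simpa [hf] using hlt
    have hopen : IsOpen (f ⁻¹' Set.Iio 1) := isOpen_Iio.preimage hcont
    obtain ⟨ε, hε, hball⟩ := Metric.isOpen_iff.1 hopen 0 (by simpa using hf0)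
    set δ := ε / 2 with hδ
    have hδpos : 0 < δ := by positivity
    have hmem : ∀ s : ℝ, |s| ≤ δ → f s < 1 := by
      intro s hs
      apply hball
      simp only [Metric.mem_ball, Real.dist_eq, sub_zero]
      calc |s| ≤ δ := hs
        _ < ε := by rw [hδ]; linarith
    have hNf : ∀ s : ℝ, (∑ i, |(u + s • e0) i| ^ (k+1)) = f s :=
      fun s => Finset.sum_congr rfl fun i _ => rfl
    have hy : ∀ s : ℝ, |s| ≤ δ → ((1:ℝ), u + s • e0) ∈ coneK d k := by
      intro s hs
      apply Set.mem_of_subset_of_mem (subset_convexHull ℝ _)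
      right
      exact ⟨rfl, by rw [hNf s]; exact (hmem s hs).le⟩
    have hyp := hy δ (by rw [abs_of_pos hδpos])
    have hym := hy (-δ) (by rw [abs_neg, abs_of_pos hδpos])
    have hxseg : ((1:ℝ), u) ∈ openSegment ℝ ((1:ℝ), u + (-δ) • e0) ((1:ℝ), u + δ • e0) := by
      refine ⟨1/2, 1/2, by norm_num, by norm_num, by norm_num, ?_⟩
      refine Prod.ext ?_ ?_
      · show (1:ℝ)/2 * 1 + 1/2 * 1 = 1; norm_num
      · show ((1:ℝ)/2) • (u + (-δ) • e0) + ((1:ℝ)/2) • (u + δ • e0) = u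
        module
    have hcontr := ((mem_extremePoints.1 hx).2 _ hym _ hyp hxseg).1
    have : (u + (-δ) • e0) i0 = u i0 := congrArg (fun q : ℝ × EuclideanSpace ℝ (Fin (d-1)) => q.2 i0) hcontr
    have he0i0 : e0 i0 = 1 := by rw [he0, EuclideanSpace.single_apply]; simp
    have : u i0 + (-δ) * 1 = u i0 := by
      have h2 := this
      show u i0 + (-δ) * 1 = u i0
      calc u i0 + (-δ) * 1 = u i0 + (-δ) * e0 i0 := by rw [he0i0]
        _ = (u + (-δ) • e0) i0 := rfl
        _ = u i0 := h2
    linarith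
  · rintro p (hp | hp)
    · -- apex is extreme
      rw [Set.mem_singleton_iff] at hp
      subst hp
      rw [mem_extremePoints]
      refine ⟨subset_convexHull ℝ _ (Or.inl rfl), ?_⟩
      rintro x₁ h₁ x₂ h₂ ⟨a, b, ha, hb, hab, heq⟩
      rw [coneK_eq] at h₁ h₂
      obtain ⟨h₁0, h₁1, h₁N⟩ := h₁
      obtain ⟨h₂0, h₂1, h₂N⟩ := h₂
      have hfst : a * x₁.1 + b * x₂.1 = 0 := congrArg Prod.fst heq
      have hx₁1 : x₁.1 = 0 := by nlinarith
      have hx₂1 : x₂.1 = 0 := by nlinarith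
      have hx₁2 : x₁.2 = 0 := by
        apply vec_eq_zero_of_sum_le hk1
        rw [hx₁1] at h₁N
        simpa [zero_pow hk1.ne'] using h₁N
      have hx₂2 : x₂.2 = 0 := by
        apply vec_eq_zero_of_sum_le hk1
        rw [hx₂1] at h₂N
        simpa [zero_pow hk1.ne'] using h₂N
      constructor
      · exact Prod.ext hx₁1 hx₁2
      · exact Prod.ext hx₂1 hx₂2
    · -- sphere points are extreme
      obtain ⟨hp1, hpN⟩ := hp
      rw [mem_extremePoints]
      refine ⟨subset_convexHull ℝ _ (Or.inr ⟨hp1, hpN.le⟩), ?_⟩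
      rintro x₁ h₁ x₂ h₂ ⟨a, b, ha, hb, hab, heq⟩
      rw [coneK_eq] at h₁ h₂
      obtain ⟨h₁0, h₁1, h₁N⟩ := h₁
      obtain ⟨h₂0, h₂1, h₂N⟩ := h₂
      have hfst : a * x₁.1 + b * x₂.1 = p.1 := congrArg Prod.fst heq
      rw [hp1] at hfst
      have hx₁1 : x₁.1 = 1 := by nlinarith
      have hx₂1 : x₂.1 = 1 := by nlinarith
      rw [hx₁1, one_pow] at h₁N
      rw [hx₂1, one_pow] at h₂N
      have hsnd : ∀ i, a * x₁.2 i + b * x₂.2 i = p.2 i := by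
        intro i
        exact congrArg (fun q : ℝ × EuclideanSpace ℝ (Fin (d-1)) => q.2 i) heq
      have hveq : x₁.2 = x₂.2 := by
        by_contra hne
        have hexi : ∃ i, x₁.2 i ≠ x₂.2 i := by
          by_contra hall
          push_neg at hall
          exact hne (PiLp.ext hall)
        obtain ⟨i0, hi0⟩ := hexi
        have hlei : ∀ i ∈ Finset.univ, |p.2 i| ^ (k+1) ≤ a * |x₁.2 i| ^ (k+1) + b * |x₂.2 i| ^ (k+1) := by
          intro i _
          rw [← hsnd i]
          rcases eq_or_ne (x₁.2 i) (x₂.2 i) with he | hne'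
          · rw [he]
            have : a * x₂.2 i + b * x₂.2 i = x₂.2 i := by rw [← add_mul, hab, one_mul]
            rw [this]
            have : a * |x₂.2 i| ^ (k+1) + b * |x₂.2 i| ^ (k+1) = |x₂.2 i| ^ (k+1) := by
              rw [← add_mul, hab, one_mul]
            rw [this]
          · exact (strict_ineq hk2 ha hb hab hne').le
        have hlti0 : |p.2 i0| ^ (k+1) < a * |x₁.2 i0| ^ (k+1) + b * |x₂.2 i0| ^ (k+1) := by
          rw [← hsnd i0]
          exact strict_ineq hk2 ha hb hab hi0
        have hsumlt : ∑ i, |p.2 i| ^ (k+1) <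
            ∑ i, (a * |x₁.2 i| ^ (k+1) + b * |x₂.2 i| ^ (k+1)) :=
          Finset.sum_lt_sum hlei ⟨i0, Finset.mem_univ i0, hlti0⟩
        rw [Finset.sum_add_distrib, ← Finset.mul_sum, ← Finset.mul_sum, hpN] at hsumlt
        have hA := mul_le_mul_of_nonneg_left h₁N ha.le
        have hB := mul_le_mul_of_nonneg_left h₂N hb.le
        linarith
      have hx12 : x₁ = x₂ := Prod.ext (by rw [hx₁1, hx₂1]) hveq
      have hx1p : x₁ = p := by
        rw [hx12] at heq
        have : (a + b) • x₂ = p := by rw [add_smul]; exact heq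
        rw [hab, one_smul] at this
        rw [hx12, this]
      exact ⟨hx1p, by rw [← hx12, hx1p]⟩
lemma euclid_single_neg {m : ℕ} (i : Fin m) :
    EuclideanSpace.single i (-1:ℝ) = - EuclideanSpace.single i (1:ℝ) := by
  ext j
  show EuclideanSpace.single i (-1:ℝ) j = -(EuclideanSpace.single i (1:ℝ) j)
  rw [EuclideanSpace.single_apply, EuclideanSpace.single_apply]
  split <;> simp

lemma euclid_sum {m : ℕ} (v : EuclideanSpace ℝ (Fin m)) :
    v = ∑ i, v i • EuclideanSpace.single i (1:ℝ) := by
  ext j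
  rw [WithLp.ofLp_sum, Finset.sum_apply]
  show v j = ∑ i, (v i • EuclideanSpace.single i (1:ℝ)) j
  have : ∀ i, (v i • EuclideanSpace.single i (1:ℝ)) j = if j = i then v i else 0 := by
    intro i
    show v i * EuclideanSpace.single i (1:ℝ) j = _
    rw [EuclideanSpace.single_apply]
    split <;> simp
  rw [Finset.sum_congr rfl fun i _ => this i]
  simp

lemma single_mem_sphK (d k : ℕ) (i : Fin (d-1)) (c : ℝ) (hc : |c| = 1) :
    ((1:ℝ), EuclideanSpace.single i c) ∈ sphK d k := by
  refine ⟨rfl, ?_⟩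
  show ∑ j, |EuclideanSpace.single i c j| ^ (k+1) = 1
  rw [sum_single_pow (Nat.succ_pos k), hc, one_pow]

lemma span_top (d k : ℕ) (hd : 3 ≤ d) (hk : 1 ≤ k)
    (q : ℝ × EuclideanSpace ℝ (Fin (d-1))) (s : Set (ℝ × EuclideanSpace ℝ (Fin (d-1))))
    (h0 : ((0:ℝ), (0:EuclideanSpace ℝ (Fin (d-1)))) ∈ s)
    (hs : ∀ p ∈ sphK d k, p ≠ q → p ∈ s) :
    affineSpan ℝ s = ⊤ := by
  have hdim : 0 < d - 1 := by omega
  have hdim2 : 1 < d - 1 := by omega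
  set P : Fin (d-1) → ℝ × EuclideanSpace ℝ (Fin (d-1)) :=
    fun i => ((1:ℝ), EuclideanSpace.single i (1:ℝ)) with hP
  set M : Fin (d-1) → ℝ × EuclideanSpace ℝ (Fin (d-1)) :=
    fun i => ((1:ℝ), EuclideanSpace.single i (-1:ℝ)) with hM
  set V := vectorSpan ℝ s with hVdef
  have hV : ∀ p ∈ s, p ∈ V := by
    intro p hp
    have := vsub_mem_vectorSpan ℝ hp h0
    simpa [vsub_eq_sub, Prod.mk_zero_zero] using this
  have hsingle_ne : ∀ (i j : Fin (d-1)) (ci cj : ℝ), ci ≠ 0 → i ≠ j →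
      EuclideanSpace.single i ci ≠ EuclideanSpace.single j cj := by
    intro i j ci cj hci hij heq
    have : EuclideanSpace.single i ci i = EuclideanSpace.single j cj i :=
      congrArg (fun v : EuclideanSpace ℝ (Fin (d-1)) => v i) heq
    rw [EuclideanSpace.single_apply, EuclideanSpace.single_apply] at this
    simp only [if_pos rfl, if_neg hij] at this
    exact hci this
  have hPmem : ∀ i, q ≠ P i → P i ∈ V :=
    fun i hq => hV _ (hs _ (single_mem_sphK d k i 1 (by norm_num)) (fun h => hq h.symm))
  have hMmem : ∀ i, q ≠ M i → M i ∈ V :=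
    fun i hq => hV _ (hs _ (single_mem_sphK d k i (-1) (by norm_num)) (fun h => hq h.symm))
  have hpair : ∀ i : Fin (d-1), P i ∈ V → M i ∈ V →
      ((0:ℝ), EuclideanSpace.single i (1:ℝ)) ∈ V := by
    intro i hPi hMi
    have heq : ((0:ℝ), EuclideanSpace.single i (1:ℝ)) = (2⁻¹ : ℝ) • (P i - M i) := by
      refine Prod.ext ?_ ?_
      · show (0:ℝ) = 2⁻¹ * (1 - 1); norm_num
      · show EuclideanSpace.single i (1:ℝ)
            = (2⁻¹ : ℝ) • (EuclideanSpace.single i (1:ℝ) - EuclideanSpace.single i (-1:ℝ))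
        rw [euclid_single_neg]
        module
    rw [heq]
    exact Submodule.smul_mem _ _ (Submodule.sub_mem _ hPi hMi)
  have hpt_ne : ∀ (i j : Fin (d-1)) (ci cj : ℝ), ci ≠ 0 → i ≠ j →
      ((1:ℝ), EuclideanSpace.single i ci) ≠ ((1:ℝ), EuclideanSpace.single j cj) :=
    fun i j ci cj hci hij h => hsingle_ne i j ci cj hci hij (congrArg Prod.snd h)
  have hPM_ne : ∀ i : Fin (d-1), P i ≠ M i := by
    intro i h
    have h2 : (P i).2 i = (M i).2 i := congrArg (fun q : ℝ × EuclideanSpace ℝ (Fin (d-1)) => q.2 i) h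
    rw [show (P i).2 = EuclideanSpace.single i (1:ℝ) from rfl,
      show (M i).2 = EuclideanSpace.single i (-1:ℝ) from rfl] at h2
    rw [EuclideanSpace.single_apply, EuclideanSpace.single_apply] at h2
    norm_num at h2
  have claim1 : ∀ i : Fin (d-1), ((0:ℝ), EuclideanSpace.single i (1:ℝ)) ∈ V := by
    intro i
    by_cases hqP : q = P i
    · -- q = P i; use M i and another index j
      set j : Fin (d-1) := if i = ⟨0, hdim⟩ then ⟨1, hdim2⟩ else ⟨0, hdim⟩ with hj
      have hij : i ≠ j := by
        rw [hj]; split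
        · next h => rw [h]; intro hc; exact absurd (Fin.val_eq_of_eq hc) (by simp)
        · next h => intro hc; exact h hc
      have hqPj : q ≠ P j := by rw [hqP]; exact hpt_ne i j 1 1 one_ne_zero hij
      have hqMj : q ≠ M j := by rw [hqP]; exact hpt_ne i j 1 (-1) one_ne_zero hij
      have hej : ((0:ℝ), EuclideanSpace.single j (1:ℝ)) ∈ V :=
        hpair j (hPmem j hqPj) (hMmem j hqMj)
      have hMi : M i ∈ V := hMmem i (by rw [hqP]; exact hPM_ne i)
      have hPj : P j ∈ V := hPmem j hqPj
      have heq : ((0:ℝ), EuclideanSpace.single i (1:ℝ))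
          = -(M i - P j + ((0:ℝ), EuclideanSpace.single j (1:ℝ))) := by
        refine Prod.ext ?_ ?_
        · show (0:ℝ) = -((1 - 1) + 0); norm_num
        · show EuclideanSpace.single i (1:ℝ)
            = -(EuclideanSpace.single i (-1:ℝ) - EuclideanSpace.single j (1:ℝ)
                + EuclideanSpace.single j (1:ℝ))
          rw [euclid_single_neg]
          module
      rw [heq]
      exact Submodule.neg_mem _ (Submodule.add_mem _ (Submodule.sub_mem _ hMi hPj) hej)
    · by_cases hqM : q = M i
      · set j : Fin (d-1) := if i = ⟨0, hdim⟩ then ⟨1, hdim2⟩ else ⟨0, hdim⟩ with hj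
        have hij : i ≠ j := by
          rw [hj]; split
          · next h => rw [h]; intro hc; exact absurd (Fin.val_eq_of_eq hc) (by simp)
          · next h => intro hc; exact h hc
        have hqPj : q ≠ P j := by rw [hqM]; exact hpt_ne i j (-1) 1 (by norm_num) hij
        have hqMj : q ≠ M j := by rw [hqM]; exact hpt_ne i j (-1) (-1) (by norm_num) hij
        have hej : ((0:ℝ), EuclideanSpace.single j (1:ℝ)) ∈ V :=
          hpair j (hPmem j hqPj) (hMmem j hqMj)
        have hPi : P i ∈ V := hPmem i hqP
        have hPj : P j ∈ V := hPmem j hqPj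
        have heq : ((0:ℝ), EuclideanSpace.single i (1:ℝ))
            = P i - P j + ((0:ℝ), EuclideanSpace.single j (1:ℝ)) := by
          refine Prod.ext ?_ ?_
          · show (0:ℝ) = 1 - 1 + 0; norm_num
          · show EuclideanSpace.single i (1:ℝ)
              = EuclideanSpace.single i (1:ℝ) - EuclideanSpace.single j (1:ℝ)
                + EuclideanSpace.single j (1:ℝ)
            module
        rw [heq]
        exact Submodule.add_mem _ (Submodule.sub_mem _ hPi hPj) hej
      · exact hpair i (hPmem i hqP) (hMmem i hqM)
  have claim2 : ((1:ℝ), (0:EuclideanSpace ℝ (Fin (d-1)))) ∈ V := by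
    set i : Fin (d-1) := ⟨0, hdim⟩
    by_cases hqP : q = P i
    · have hMi : M i ∈ V := hMmem i (by rw [hqP]; exact hPM_ne i)
      have heq : ((1:ℝ), (0:EuclideanSpace ℝ (Fin (d-1))))
          = M i + ((0:ℝ), EuclideanSpace.single i (1:ℝ)) := by
        refine Prod.ext ?_ ?_
        · show (1:ℝ) = 1 + 0; norm_num
        · show (0:EuclideanSpace ℝ (Fin (d-1)))
            = EuclideanSpace.single i (-1:ℝ) + EuclideanSpace.single i (1:ℝ)
          rw [euclid_single_neg]; module
      rw [heq]
      exact Submodule.add_mem _ hMi (claim1 i)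
    · have hPi : P i ∈ V := hPmem i hqP
      have heq : ((1:ℝ), (0:EuclideanSpace ℝ (Fin (d-1))))
          = P i - ((0:ℝ), EuclideanSpace.single i (1:ℝ)) := by
        refine Prod.ext ?_ ?_
        · show (1:ℝ) = 1 - 0; norm_num
        · show (0:EuclideanSpace ℝ (Fin (d-1)))
            = EuclideanSpace.single i (1:ℝ) - EuclideanSpace.single i (1:ℝ)
          module
      rw [heq]
      exact Submodule.sub_mem _ hPi (claim1 i)
  rw [AffineSubspace.affineSpan_eq_top_iff_vectorSpan_eq_top_of_nonempty ℝ _ _ ⟨_, h0⟩]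
  rw [← hVdef, Submodule.eq_top_iff']
  intro x
  have hdecomp : x = x.1 • ((1:ℝ), (0:EuclideanSpace ℝ (Fin (d-1))))
      + ∑ i, x.2 i • ((0:ℝ), EuclideanSpace.single i (1:ℝ)) := by
    refine Prod.ext ?_ ?_
    · show x.1 = x.1 * 1 + (∑ i, x.2 i • ((0:ℝ), EuclideanSpace.single i (1:ℝ))).1
      rw [Prod.fst_sum]
      simp
    · show x.2 = x.1 • (0:EuclideanSpace ℝ (Fin (d-1)))
        + (∑ i, x.2 i • ((0:ℝ), EuclideanSpace.single i (1:ℝ))).2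
      rw [Prod.snd_sum, smul_zero, zero_add]
      simpa using euclid_sum x.2
  rw [hdecomp]
  exact Submodule.add_mem _ (Submodule.smul_mem _ _ claim2)
    (Submodule.sum_mem _ fun i _ => Submodule.smul_mem _ _ (claim1 i))
lemma extremePoints_image_affine {E : Type*} [AddCommGroup E] [Module ℝ E]
    (e : E ≃ᵃ[ℝ] E) (A : Set E) :
    e '' Set.extremePoints ℝ A = Set.extremePoints ℝ (e '' A) := by
  ext b
  obtain ⟨a, rfl⟩ := e.surjective b
  have himg : ∀ x y : E, e '' openSegment ℝ x y = openSegment ℝ (e x) (e y) :=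
    fun x y => image_openSegment ℝ e.toAffineMap x y
  constructor
  · rintro ⟨a', ha', hea⟩
    rw [e.injective.eq_iff] at hea
    subst hea
    rw [mem_extremePoints] at ha' ⊢
    refine ⟨Set.mem_image_of_mem e ha'.1, ?_⟩
    rintro x₁ ⟨y₁, hy₁, rfl⟩ x₂ ⟨y₂, hy₂, rfl⟩ hseg
    rw [← himg, e.injective.mem_set_image] at hseg
    obtain ⟨hh1, hh2⟩ := ha'.2 y₁ hy₁ y₂ hy₂ hseg
    exact ⟨by rw [hh1], by rw [hh2]⟩
  · intro hb
    rw [mem_extremePoints] at hb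
    refine ⟨a, ?_, rfl⟩
    rw [mem_extremePoints]
    have hA : a ∈ A := by
      have := hb.1
      rwa [e.injective.mem_set_image] at this
    refine ⟨hA, ?_⟩
    intro x₁ h₁ x₂ h₂ hseg
    have hseg' : e a ∈ openSegment ℝ (e x₁) (e x₂) := by
      rw [← himg]
      exact Set.mem_image_of_mem e hseg
    obtain ⟨hh1, hh2⟩ := hb.2 (e x₁) (Set.mem_image_of_mem e h₁)
      (e x₂) (Set.mem_image_of_mem e h₂) hseg'
    exact ⟨e.injective hh1, e.injective hh2⟩

lemma sphere_image (d k : ℕ) (hd : 3 ≤ d) (hk : 1 ≤ k)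
    (T : (ℝ × EuclideanSpace ℝ (Fin (d - 1))) ≃ᵃ[ℝ] (ℝ × EuclideanSpace ℝ (Fin (d - 1))))
    (hT : T '' coneK d k = coneK d k)
    (h0 : T ((0:ℝ), (0:EuclideanSpace ℝ (Fin (d-1)))) = ((0:ℝ), (0:EuclideanSpace ℝ (Fin (d-1))))) :
    T '' sphK d k = sphK d k := by
  have hEP := extremePoints_coneK d k hd hk
  have hTEP : T '' Set.extremePoints ℝ (coneK d k) = Set.extremePoints ℝ (coneK d k) := by
    rw [extremePoints_image_affine, hT]
  have h0S : ((0:ℝ), (0:EuclideanSpace ℝ (Fin (d-1)))) ∉ sphK d k := by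
    intro h
    exact zero_ne_one h.1
  have hdiff : ({((0:ℝ), (0:EuclideanSpace ℝ (Fin (d-1))))} ∪ sphK d k)
      \ {((0:ℝ), (0:EuclideanSpace ℝ (Fin (d-1))))} = sphK d k := by
    rw [Set.union_diff_left, Set.diff_singleton_eq_self h0S]
  calc T '' sphK d k
      = T '' (Set.extremePoints ℝ (coneK d k) \ {((0:ℝ), (0:EuclideanSpace ℝ (Fin (d-1))))}) := by
        rw [hEP, hdiff]
    _ = (T '' Set.extremePoints ℝ (coneK d k))
        \ (T '' {((0:ℝ), (0:EuclideanSpace ℝ (Fin (d-1))))}) :=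
        Set.image_diff T.injective _ _
    _ = Set.extremePoints ℝ (coneK d k) \ {((0:ℝ), (0:EuclideanSpace ℝ (Fin (d-1))))} := by
        rw [hTEP, Set.image_singleton, h0]
    _ = sphK d k := by rw [hEP, hdiff]
lemma affine_fixes_zero_linear {E : Type*} [AddCommGroup E] [Module ℝ E]
    (e : E ≃ᵃ[ℝ] E) (h : e 0 = 0) : ∀ x, e x = e.linear x := by
  intro x
  have h2 := e.map_vadd 0 x
  simp only [vadd_eq_add, add_zero, h] at h2
  exact h2

/-- every invertible affine symmetry `T` of the cone `K_k` fixes the apex,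
maps `{1} × ∂B_{k+1}^{d-1}` to itself, preserves the first coordinate, and fixes every
point of the axis intersected with `K_k`. -/
theorem stmt_8 (d k : ℕ) (hd : 3 ≤ d) (hk : 1 ≤ k)
    (T : (ℝ × EuclideanSpace ℝ (Fin (d - 1))) ≃ᵃ[ℝ] (ℝ × EuclideanSpace ℝ (Fin (d - 1))))
    (hT : T '' coneK d k = coneK d k) :
    T (0, 0) = (0, 0) ∧
      T '' {p : ℝ × EuclideanSpace ℝ (Fin (d - 1)) |
            p.1 = 1 ∧ ∑ i, |p.2 i| ^ (k + 1) = 1} =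
          {p : ℝ × EuclideanSpace ℝ (Fin (d - 1)) |
            p.1 = 1 ∧ ∑ i, |p.2 i| ^ (k + 1) = 1} ∧
      (∀ p : ℝ × EuclideanSpace ℝ (Fin (d - 1)), (T p).1 = p.1) ∧
      ∀ t : ℝ, ((t, 0) : ℝ × EuclideanSpace ℝ (Fin (d - 1))) ∈ coneK d k →
        T (t, 0) = (t, 0) := by
  have hk1 : 0 < k + 1 := Nat.succ_pos k
  have hdim : 0 < d - 1 := by omega
  have hEP := extremePoints_coneK d k hd hk
  have hTEP : T '' Set.extremePoints ℝ (coneK d k) = Set.extremePoints ℝ (coneK d k) := by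
    rw [extremePoints_image_affine, hT]
  have h0mem : ((0:ℝ), (0:EuclideanSpace ℝ (Fin (d-1)))) ∈ Set.extremePoints ℝ (coneK d k) := by
    rw [hEP]; exact Or.inl rfl
  -- Claim 1 : T fixes the apex
  have claim1 : T ((0:ℝ), (0:EuclideanSpace ℝ (Fin (d-1)))) = (0, 0) := by
    by_contra hne
    have hq : T (0, 0) ∈ Set.extremePoints ℝ (coneK d k) := by
      rw [← hTEP]; exact Set.mem_image_of_mem T h0mem
    rw [hEP] at hq
    have hqS : T (0, 0) ∈ sphK d k := by
      rcases hq with hq0 | hq0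
      · exact absurd hq0 hne
      · exact hq0
    have h0img : ((0:ℝ), (0:EuclideanSpace ℝ (Fin (d-1)))) ∈
        T '' Set.extremePoints ℝ (coneK d k) := by rw [hTEP]; exact h0mem
    obtain ⟨p, hpEP, hp⟩ := h0img
    have hpne : p ≠ (0, 0) := by
      rintro rfl
      exact hne hp
    have hpS : p ∈ sphK d k := by
      rw [hEP] at hpEP
      rcases hpEP with h | h
      · exact absurd h hpne
      · exact h
    set f : (ℝ × EuclideanSpace ℝ (Fin (d-1))) →ᵃ[ℝ] ℝ :=
      ((LinearMap.fst ℝ ℝ (EuclideanSpace ℝ (Fin (d-1)))).toAffineMap).comp T.symm.toAffineMap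
      with hf
    have hfapp : ∀ x, f x = (T.symm x).1 := fun _ => rfl
    set A := AffineSubspace.comap f (affineSpan ℝ ({(1:ℝ)} : Set ℝ)) with hA
    have hsub : {((0:ℝ), (0:EuclideanSpace ℝ (Fin (d-1))))} ∪ (sphK d k \ {T (0, 0)})
        ⊆ (A : Set (ℝ × EuclideanSpace ℝ (Fin (d-1)))) := by
      rintro x hx
      rw [SetLike.mem_coe, hA, AffineSubspace.mem_comap,
        AffineSubspace.mem_affineSpan_singleton, hfapp]
      rcases hx with hx0 | ⟨hxS, hxq⟩
      · rw [Set.mem_singleton_iff] at hx0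
        subst hx0
        have hsymm : T.symm ((0:ℝ), (0:EuclideanSpace ℝ (Fin (d-1)))) = p := by
          rw [← hp, T.symm_apply_apply]
        rw [hsymm]
        exact hpS.1
      · have hxEP : x ∈ Set.extremePoints ℝ (coneK d k) := by
          rw [hEP]; exact Or.inr hxS
        rw [← hTEP] at hxEP
        obtain ⟨y, hyEP, hyx⟩ := hxEP
        have hysymm : T.symm x = y := by rw [← hyx, T.symm_apply_apply]
        have hyne : y ≠ (0, 0) := by
          rintro rfl
          exact hxq (by rw [Set.mem_singleton_iff, ← hyx])
        have hyS : y ∈ sphK d k := by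
          rw [hEP] at hyEP
          rcases hyEP with h | h
          · exact absurd h hyne
          · exact h
        rw [hysymm]
        exact hyS.1
    have hspan := span_top d k hd hk (T (0, 0))
      ({((0:ℝ), (0:EuclideanSpace ℝ (Fin (d-1))))} ∪ (sphK d k \ {T (0, 0)}))
      (Or.inl rfl) (fun p hp hne' => Or.inr ⟨hp, hne'⟩)
    have hle : affineSpan ℝ ({((0:ℝ), (0:EuclideanSpace ℝ (Fin (d-1))))}
        ∪ (sphK d k \ {T (0, 0)})) ≤ A := affineSpan_le.2 hsub
    rw [hspan] at hle
    have hcontr : T (0, 0) ∈ A := hle (AffineSubspace.mem_top ℝ _ _)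
    rw [hA, AffineSubspace.mem_comap, AffineSubspace.mem_affineSpan_singleton, hfapp,
      T.symm_apply_apply] at hcontr
    exact zero_ne_one hcontr
  -- T is linear
  have Tlin : ∀ x, T x = T.linear x := by
    intro x
    have := affine_fixes_zero_linear T (by exact claim1) x
    exact this
  -- Claim 2 : T maps the sphere to itself
  have claim2 : T '' sphK d k = sphK d k := sphere_image d k hd hk T hT claim1
  -- decomposition of a point
  have hdecomp : ∀ p : ℝ × EuclideanSpace ℝ (Fin (d-1)),
      p = p.1 • ((1:ℝ), (0:EuclideanSpace ℝ (Fin (d-1))))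
        + ∑ i, p.2 i • ((0:ℝ), EuclideanSpace.single i (1:ℝ)) := by
    intro p
    refine Prod.ext ?_ ?_
    · show p.1 = p.1 * 1 + (∑ i, p.2 i • ((0:ℝ), EuclideanSpace.single i (1:ℝ))).1
      rw [Prod.fst_sum]
      simp
    · show p.2 = p.1 • (0:EuclideanSpace ℝ (Fin (d-1)))
        + (∑ i, p.2 i • ((0:ℝ), EuclideanSpace.single i (1:ℝ))).2
      rw [Prod.snd_sum, smul_zero, zero_add]
      simpa using euclid_sum p.2
  -- Claim 3 : T preserves the first coordinate
  have hTS : ∀ p ∈ sphK d k, (T p).1 = 1 := by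
    intro p hp
    have : T p ∈ sphK d k := by rw [← claim2]; exact Set.mem_image_of_mem T hp
    exact this.1
  have hLP : ∀ (i : Fin (d-1)) (c : ℝ), |c| = 1 →
      (T.linear ((1:ℝ), EuclideanSpace.single i c)).1 = 1 := by
    intro i c hc
    rw [← Tlin]
    exact hTS _ (single_mem_sphK d k i c hc)
  have hL10 : (T.linear ((1:ℝ), (0:EuclideanSpace ℝ (Fin (d-1))))).1 = 1 := by
    set i : Fin (d-1) := ⟨0, hdim⟩
    have hsum : ((1:ℝ), (0:EuclideanSpace ℝ (Fin (d-1))))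
        = (2⁻¹:ℝ) • (((1:ℝ), EuclideanSpace.single i (1:ℝ))
          + ((1:ℝ), EuclideanSpace.single i (-1:ℝ))) := by
      refine Prod.ext ?_ ?_
      · show (1:ℝ) = 2⁻¹ * (1 + 1); norm_num
      · show (0:EuclideanSpace ℝ (Fin (d-1)))
          = (2⁻¹:ℝ) • (EuclideanSpace.single i (1:ℝ) + EuclideanSpace.single i (-1:ℝ))
        rw [euclid_single_neg]; module
    rw [hsum, map_smul, map_add, Prod.smul_fst, Prod.fst_add, smul_eq_mul,
      hLP i 1 (by norm_num), hLP i (-1) (by norm_num)]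
    norm_num
  have hL0e : ∀ i : Fin (d-1),
      (T.linear ((0:ℝ), EuclideanSpace.single i (1:ℝ))).1 = 0 := by
    intro i
    have hsum : ((0:ℝ), EuclideanSpace.single i (1:ℝ))
        = (2⁻¹:ℝ) • (((1:ℝ), EuclideanSpace.single i (1:ℝ))
          - ((1:ℝ), EuclideanSpace.single i (-1:ℝ))) := by
      refine Prod.ext ?_ ?_
      · show (0:ℝ) = 2⁻¹ * (1 - 1); norm_num
      · show EuclideanSpace.single i (1:ℝ)
          = (2⁻¹:ℝ) • (EuclideanSpace.single i (1:ℝ) - EuclideanSpace.single i (-1:ℝ))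
        rw [euclid_single_neg]; module
    rw [hsum, map_smul, map_sub, Prod.smul_fst, Prod.fst_sub, smul_eq_mul,
      hLP i 1 (by norm_num), hLP i (-1) (by norm_num)]
    norm_num
  have claim3 : ∀ p : ℝ × EuclideanSpace ℝ (Fin (d-1)), (T p).1 = p.1 := by
    intro p
    rw [Tlin]
    conv_lhs => rw [hdecomp p]
    rw [map_add, map_smul, map_sum, Prod.fst_add, Prod.smul_fst, Prod.fst_sum, smul_eq_mul,
      hL10, mul_one]
    have : ∀ i : Fin (d-1),
        (T.linear (p.2 i • ((0:ℝ), EuclideanSpace.single i (1:ℝ)))).1 = 0 := by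
      intro i
      rw [map_smul, Prod.smul_fst, smul_eq_mul, hL0e, mul_zero]
    rw [Finset.sum_congr rfl fun i _ => this i, Finset.sum_const_zero, add_zero]
  -- symm facts
  have hsymm1 : ∀ x : ℝ × EuclideanSpace ℝ (Fin (d-1)), (T.symm x).1 = x.1 := by
    intro x
    conv_rhs => rw [← T.apply_symm_apply x]
    rw [claim3]
  -- negation symmetry
  set Sneg : (ℝ × EuclideanSpace ℝ (Fin (d-1))) ≃ᵃ[ℝ] (ℝ × EuclideanSpace ℝ (Fin (d-1))) :=
    (LinearEquiv.prodCongr (LinearEquiv.refl ℝ ℝ) (LinearEquiv.neg ℝ)).toAffineEquiv with hSnegdef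
  have hSneg : ∀ p : ℝ × EuclideanSpace ℝ (Fin (d-1)), Sneg p = (p.1, -p.2) := fun _ => rfl
  have hnegK : ∀ p ∈ coneK d k, ((p.1, -p.2) : ℝ × EuclideanSpace ℝ (Fin (d-1))) ∈ coneK d k := by
    intro p hp
    rw [coneK_eq] at hp ⊢
    refine ⟨hp.1, hp.2.1, ?_⟩
    show ∑ i, |(-p.2 : EuclideanSpace ℝ (Fin (d-1))) i| ^ (k+1) ≤ p.1 ^ (k+1)
    calc ∑ i, |(-p.2 : EuclideanSpace ℝ (Fin (d-1))) i| ^ (k+1)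
        = ∑ i, |p.2 i| ^ (k+1) := Finset.sum_congr rfl fun i _ => by
          rw [show (-p.2 : EuclideanSpace ℝ (Fin (d-1))) i = -(p.2 i) from rfl, abs_neg]
      _ ≤ p.1 ^ (k+1) := hp.2.2
  have hSnegK : Sneg '' coneK d k = coneK d k := by
    apply Set.Subset.antisymm
    · rintro x ⟨p, hp, rfl⟩
      rw [hSneg]
      exact hnegK p hp
    · intro p hp
      refine ⟨(p.1, -p.2), hnegK p hp, ?_⟩
      rw [hSneg]
      show ((p.1, -(-p.2)) : ℝ × EuclideanSpace ℝ (Fin (d-1))) = p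
      rw [neg_neg]
  set Φ : (ℝ × EuclideanSpace ℝ (Fin (d-1))) ≃ᵃ[ℝ] (ℝ × EuclideanSpace ℝ (Fin (d-1))) :=
    T.symm.trans (Sneg.trans T) with hΦdef
  have hΦapp : ∀ x, Φ x = T (Sneg (T.symm x)) := fun _ => rfl
  have hTsK : T.symm '' coneK d k = coneK d k := by
    conv_lhs => rw [← hT]
    rw [Set.image_image]
    simp only [T.symm_apply_apply, Set.image_id']
  have hΦK : Φ '' coneK d k = coneK d k := by
    have h1 : Φ '' coneK d k = T '' (Sneg '' (T.symm '' coneK d k)) := by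
      rw [Set.image_image, Set.image_image]
      rfl
    rw [h1, hTsK, hSnegK, hT]
  have hΦ0 : Φ ((0:ℝ), (0:EuclideanSpace ℝ (Fin (d-1)))) = (0, 0) := by
    rw [hΦapp]
    have h1 : T.symm ((0:ℝ), (0:EuclideanSpace ℝ (Fin (d-1)))) = (0, 0) := by
      have h2 := congrArg T.symm claim1
      rw [T.symm_apply_apply] at h2
      exact h2.symm
    rw [h1, hSneg]
    show T ((0:ℝ), -(0:EuclideanSpace ℝ (Fin (d-1)))) = (0, 0)
    rw [neg_zero, claim1]
  have hΦS : Φ '' sphK d k = sphK d k := sphere_image d k hd hk Φ hΦK hΦ0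
  have Φlin : ∀ x, Φ x = Φ.linear x := affine_fixes_zero_linear Φ (by exact hΦ0)
  set w : EuclideanSpace ℝ (Fin (d-1)) := (T ((1:ℝ), (0:EuclideanSpace ℝ (Fin (d-1))))).2 with hw
  have hT10 : T ((1:ℝ), (0:EuclideanSpace ℝ (Fin (d-1)))) = (1, w) := by
    refine Prod.ext ?_ rfl
    rw [claim3]
  have hΦ1w : Φ ((1:ℝ), w) = (1, w) := by
    rw [← hT10, hΦapp, T.symm_apply_apply]
    have h1 : Sneg ((1:ℝ), (0:EuclideanSpace ℝ (Fin (d-1)))) = (1, 0) := by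
      rw [hSneg]
      show ((1:ℝ), -(0:EuclideanSpace ℝ (Fin (d-1)))) = (1, 0)
      rw [neg_zero]
    rw [h1]
  have hΦ0u : ∀ u : EuclideanSpace ℝ (Fin (d-1)), Φ ((0:ℝ), u) = ((0:ℝ), -u) := by
    intro u
    rw [hΦapp]
    set z := T.symm ((0:ℝ), u) with hz
    have hz1 : z.1 = 0 := hsymm1 _
    have hzz : Sneg z = -z := by
      rw [hSneg]
      refine Prod.ext ?_ rfl
      show z.1 = (-z).1
      rw [show (-z).1 = -z.1 from rfl, hz1, neg_zero]
    rw [hzz]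
    have hTneg : T (-z) = - T z := by
      rw [Tlin, Tlin, map_neg]
    rw [hTneg, hz, T.apply_symm_apply, Prod.neg_mk, neg_zero]
  have hΦ1v : ∀ v : EuclideanSpace ℝ (Fin (d-1)),
      Φ ((1:ℝ), v) = ((1:ℝ), w + (w - v)) := by
    intro v
    have hsplit : ((1:ℝ), v) = ((1:ℝ), w) + ((0:ℝ), v - w) := by
      refine Prod.ext ?_ ?_
      · show (1:ℝ) = 1 + 0; norm_num
      · show v = w + (v - w); module
    rw [hsplit, Φlin, map_add, ← Φlin, ← Φlin, hΦ1w, hΦ0u]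
    refine Prod.ext ?_ ?_
    · show (1:ℝ) + 0 = 1; norm_num
    · show w + -(v - w) = w + (w - v); module
  -- w = 0
  have hwzero : w = 0 := by
    by_contra hw0
    set Nw := ∑ i, |w i| ^ (k+1) with hNw
    have hNwpos : 0 < Nw := by
      obtain ⟨i, hi⟩ : ∃ i, w i ≠ 0 := by
        by_contra hall
        push_neg at hall
        exact hw0 (PiLp.ext hall)
      exact Finset.sum_pos' (fun j _ => pow_nonneg (abs_nonneg _) _)
        ⟨i, Finset.mem_univ i, pow_pos (abs_pos.2 hi) _⟩
    set c : ℝ := Nw ^ (((k+1:ℕ):ℝ))⁻¹ with hc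
    have hcpow : c ^ (k+1) = Nw := Real.rpow_inv_natCast_pow hNwpos.le (Nat.succ_ne_zero k)
    have hcpos : 0 < c := Real.rpow_pos_of_pos hNwpos _
    set v : EuclideanSpace ℝ (Fin (d-1)) := -(c⁻¹ • w) with hv
    have hvsum : ∑ i, |v i| ^ (k+1) = 1 := by
      have hco : ∀ i, |v i| ^ (k+1) = c⁻¹ ^ (k+1) * |w i| ^ (k+1) := by
        intro i
        show |(-(c⁻¹ • w) : EuclideanSpace ℝ (Fin (d-1))) i| ^ (k+1) = _
        rw [show (-(c⁻¹ • w) : EuclideanSpace ℝ (Fin (d-1))) i = -(c⁻¹ * w i) from rfl,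
          abs_neg, abs_mul, mul_pow, abs_of_pos (inv_pos.2 hcpos)]
      rw [Finset.sum_congr rfl fun i _ => hco i, ← Finset.mul_sum, ← hNw, inv_pow, hcpow,
        inv_mul_cancel₀ hNwpos.ne']
    have hvS : ((1:ℝ), v) ∈ sphK d k := ⟨rfl, hvsum⟩
    have hΦvS : Φ ((1:ℝ), v) ∈ sphK d k := by
      rw [← hΦS]
      exact Set.mem_image_of_mem Φ hvS
    rw [hΦ1v] at hΦvS
    have hkey : ∑ i, |(w + (w - v) : EuclideanSpace ℝ (Fin (d-1))) i| ^ (k+1) = 1 := hΦvS.2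
    have hvec : (w + (w - v) : EuclideanSpace ℝ (Fin (d-1))) = (2 + c⁻¹) • w := by
      rw [hv]; module
    rw [hvec] at hkey
    have hpos2 : (0:ℝ) < 2 + c⁻¹ := by positivity
    have hsum2 : ∑ i, |((2 + c⁻¹) • w : EuclideanSpace ℝ (Fin (d-1))) i| ^ (k+1)
        = (2 + c⁻¹) ^ (k+1) * Nw := by
      have hco : ∀ i, |((2 + c⁻¹) • w : EuclideanSpace ℝ (Fin (d-1))) i| ^ (k+1)
          = (2 + c⁻¹) ^ (k+1) * |w i| ^ (k+1) := by
        intro i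
        rw [show ((2 + c⁻¹) • w : EuclideanSpace ℝ (Fin (d-1))) i = (2 + c⁻¹) * w i from rfl,
          abs_mul, mul_pow, abs_of_pos hpos2]
      rw [Finset.sum_congr rfl fun i _ => hco i, ← Finset.mul_sum]
    rw [hsum2] at hkey
    have hbig : (1:ℝ) < (2 + c⁻¹) ^ (k+1) * Nw := by
      have h1 : (2 + c⁻¹) ^ (k+1) * Nw = ((2 + c⁻¹) * c) ^ (k+1) := by
        rw [mul_pow, hcpow]
      have h2 : (2 + c⁻¹) * c = 2 * c + 1 := by
        field_simp
      rw [h1, h2]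
      have : (1:ℝ) < 2 * c + 1 := by linarith
      exact one_lt_pow₀ this (Nat.succ_ne_zero k)
    rw [hkey] at hbig
    exact lt_irrefl 1 hbig
  have hT10' : T ((1:ℝ), (0:EuclideanSpace ℝ (Fin (d-1)))) = (1, 0) := by
    rw [hT10, hwzero]
  have claim4 : ∀ t : ℝ, T ((t:ℝ), (0:EuclideanSpace ℝ (Fin (d-1)))) = (t, 0) := by
    intro t
    have hts : ((t:ℝ), (0:EuclideanSpace ℝ (Fin (d-1))))
        = t • ((1:ℝ), (0:EuclideanSpace ℝ (Fin (d-1)))) := by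
      refine Prod.ext ?_ ?_
      · show t = t * 1; rw [mul_one]
      · show (0:EuclideanSpace ℝ (Fin (d-1))) = t • 0; rw [smul_zero]
    rw [hts, Tlin, map_smul, ← Tlin, hT10', ← hts]
  exact ⟨claim1, claim2, claim3, fun t _ => claim4 t⟩
end

section
/- Let ε_d be the unique positive solution of √(1−1/d)(1−(d+1)ε²) = (d−1−1/d)ε. Then there exist t_1, t_2 > 0 such that, with v_i^± = ±√(1−ε_d²)e_i − ε_d e_1 and w_i^± = ±(1/√d)e_i + √(1−1/d)e_1 (2 ≤ i ≤ d+1), one has t_1 Σ v_i^±(v_i^±)^T + t_2 Σ w_i^±(w_i^±)^T = Id_{d+1} and t_1 Σ v_i^± + t_2 Σ w_i^± = 0. -/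
noncomputable def vPt (d : ℕ) (ε : ℝ) (i : Fin d) : Fin (d + 1) → ℝ := fun j =>
  (if j = i.succ then Real.sqrt (1 - ε ^ 2) else 0) + (if j = 0 then -ε else 0)

noncomputable def vMt (d : ℕ) (ε : ℝ) (i : Fin d) : Fin (d + 1) → ℝ := fun j =>
  (if j = i.succ then -Real.sqrt (1 - ε ^ 2) else 0) + (if j = 0 then -ε else 0)

noncomputable def wPt (d : ℕ) (i : Fin d) : Fin (d + 1) → ℝ := fun j =>
  (if j = i.succ then 1 / Real.sqrt d else 0) +
    (if j = 0 then Real.sqrt (1 - 1 / (d : ℝ)) else 0)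

noncomputable def wMt (d : ℕ) (i : Fin d) : Fin (d + 1) → ℝ := fun j =>
  (if j = i.succ then -(1 / Real.sqrt d) else 0) +
    (if j = 0 then Real.sqrt (1 - 1 / (d : ℝ)) else 0)

lemma sum2_aux {d : ℕ} (j' k' : Fin d) (c : ℝ) :
    (∑ x : Fin d, ((if j' = x then c else 0) * (if k' = x then c else 0) +
      (if j' = x then -c else 0) * (if k' = x then -c else 0))) =
    if j' = k' then 2 * (c * c) else 0 := by
  have h1 : ∀ x : Fin d, ((if j' = x then c else 0) * (if k' = x then c else 0) +
      (if j' = x then -c else 0) * (if k' = x then -c else 0)) =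
      (if j' = x then (if j' = k' then 2 * (c * c) else 0) else 0) := by
    intro x
    by_cases hjx : j' = x <;> by_cases hkx : k' = x <;>
      by_cases hjk : j' = k' <;> simp_all <;> ring
  simp_rw [h1]
  rw [Finset.sum_ite_eq]
  simp

/-- with `ε` the positive solution of the quadratic equation, there exist
weights `t₁, t₂ > 0` realizing John's decomposition of the identity with barycenter 0. -/
theorem stmt_14 (d : ℕ) (hd : 2 ≤ d) (ε : ℝ) (hεpos : 0 < ε)
    (hεeq : Real.sqrt (1 - 1 / (d : ℝ)) * (1 - ((d : ℝ) + 1) * ε ^ 2) =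
      ((d : ℝ) - 1 - 1 / (d : ℝ)) * ε) :
    ∃ t₁ t₂ : ℝ, 0 < t₁ ∧ 0 < t₂ ∧
      t₁ • (∑ i : Fin d, (Matrix.vecMulVec (vPt d ε i) (vPt d ε i) +
            Matrix.vecMulVec (vMt d ε i) (vMt d ε i))) +
        t₂ • (∑ i : Fin d, (Matrix.vecMulVec (wPt d i) (wPt d i) +
            Matrix.vecMulVec (wMt d i) (wMt d i))) =
          (1 : Matrix (Fin (d + 1)) (Fin (d + 1)) ℝ) ∧
      t₁ • (∑ i : Fin d, (vPt d ε i + vMt d ε i)) +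
        t₂ • (∑ i : Fin d, (wPt d i + wMt d i)) = (0 : Fin (d + 1) → ℝ) := by
  have hd2 : (2:ℝ) ≤ (d:ℝ) := by exact_mod_cast hd
  have hd0 : (0:ℝ) < (d:ℝ) := by linarith
  have hdne : (d:ℝ) ≠ 0 := ne_of_gt hd0
  have hdd : (d:ℝ) * (d:ℝ)⁻¹ = 1 := mul_inv_cancel₀ hdne
  rw [one_div] at hεeq
  have hinv : (d:ℝ)⁻¹ ≤ 1/2 := by
    rw [inv_eq_one_div]
    apply div_le_div_of_nonneg_left <;> linarith
  have h1d : (0:ℝ) < 1 - (d:ℝ)⁻¹ := by linarith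
  have hs : 0 < Real.sqrt (1 - (d:ℝ)⁻¹) := Real.sqrt_pos.2 h1d
  set s : ℝ := Real.sqrt (1 - (d:ℝ)⁻¹) with hs_def
  have hsne : s ≠ 0 := ne_of_gt hs
  have hss : s * s = 1 - (d:ℝ)⁻¹ := Real.mul_self_sqrt h1d.le
  have hrr : (1 / Real.sqrt d) * (1 / Real.sqrt d) = (d:ℝ)⁻¹ := by
    rw [one_div, ← mul_inv, Real.mul_self_sqrt hd0.le]
  have hcoef : (0:ℝ) < (d:ℝ) - 1 - (d:ℝ)⁻¹ := by linarith
  have h2 : 0 < 1 - ((d:ℝ) + 1) * ε ^ 2 := by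
    nlinarith [mul_pos hcoef hεpos, hs]
  have hε1 : ε ^ 2 < 1 := by nlinarith
  have haa : Real.sqrt (1 - ε ^ 2) * Real.sqrt (1 - ε ^ 2) = 1 - ε ^ 2 :=
    Real.mul_self_sqrt (by linarith)
  set E : ℝ := 2 * ((d:ℝ) * s * ε ^ 2 + ((d:ℝ) - 1) * ε) with hE_def
  have hE : 0 < E := by
    have h3 : 0 < ((d:ℝ) - 1) * ε := mul_pos (by linarith) hεpos
    have h4 : 0 ≤ (d:ℝ) * s * ε ^ 2 := by positivity
    rw [hE_def]; nlinarith
  have hEne : E ≠ 0 := ne_of_gt hE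
  have K1 : s / E * ((d:ℝ) * (ε * ε) + (d:ℝ) * (ε * ε)) +
      ε / E * ((d:ℝ) * (s * s) + (d:ℝ) * (s * s)) = 1 := by
    rw [div_mul_eq_mul_div, div_mul_eq_mul_div, ← add_div,
      div_eq_one_iff_eq hEne, hE_def]
    linear_combination (2 * (d:ℝ) * ε) * hss - 2 * ε * hdd
  have K2 : s / E * (2 * (1 - ε ^ 2)) + ε / E * (2 * (d:ℝ)⁻¹) = 1 := by
    rw [div_mul_eq_mul_div, div_mul_eq_mul_div, ← add_div,
      div_eq_one_iff_eq hEne, hE_def]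
    linear_combination 2 * hεeq
  refine ⟨s / E, ε / E, by positivity, by positivity, ?_, ?_⟩
  · ext j k
    simp only [Matrix.add_apply, Matrix.smul_apply, Matrix.sum_apply, Matrix.vecMulVec_apply,
      vPt, vMt, wPt, wMt, Matrix.one_apply, smul_eq_mul]
    induction j using Fin.cases with
    | zero =>
      induction k using Fin.cases with
      | zero =>
        simp only [Fin.succ_ne_zero, Ne.symm (Fin.succ_ne_zero _), if_false, ite_false,
          reduceIte, zero_add, add_zero, one_div, Finset.sum_const, Finset.card_univ,
          Fintype.card_fin, nsmul_eq_mul, ← hs_def]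
        linear_combination K1
      | succ k' =>
        simp [Fin.succ_ne_zero, Ne.symm (Fin.succ_ne_zero _), Fin.succ_inj,
          Finset.sum_add_distrib, Finset.sum_ite_eq]
    | succ j' =>
      induction k using Fin.cases with
      | zero =>
        simp [Fin.succ_ne_zero, Ne.symm (Fin.succ_ne_zero _), Fin.succ_inj,
          Finset.sum_add_distrib, Finset.sum_ite_eq]
      | succ k' =>
        simp only [Fin.succ_ne_zero, Ne.symm (Fin.succ_ne_zero _), Fin.succ_inj, if_false,
          ite_false, reduceIte, add_zero, zero_add]
        rw [sum2_aux, sum2_aux]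
        rcases eq_or_ne j' k' with h | h
        · simp only [h, if_pos rfl, ite_true, reduceIte]
          rw [haa, hrr]
          linear_combination K2
        · simp [h]
  · ext j
    simp only [Pi.add_apply, Pi.smul_apply, Finset.sum_apply, vPt, vMt, wPt, wMt,
      Pi.zero_apply, smul_eq_mul]
    induction j using Fin.cases with
    | zero =>
      simp only [Fin.succ_ne_zero, Ne.symm (Fin.succ_ne_zero _), if_false, ite_false,
        reduceIte, zero_add, add_zero, one_div, Finset.sum_const, Finset.card_univ,
        Fintype.card_fin, nsmul_eq_mul, ← hs_def]
      field_simp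
      ring
    | succ j' =>
      simp [Fin.succ_ne_zero, Ne.symm (Fin.succ_ne_zero _), Fin.succ_inj,
        Finset.sum_add_distrib, Finset.sum_ite_eq]
end
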